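/- arXiv:2101.12631 — 2 statements merged into one kernel-verified Lean document; each statement's English description precedes it below -/
import Mathlib

section
/- Let p be a point in a metric space, C a finite set of points not containing p, N ⊆ C, and m ∈ C \ N a point such that every n ∈ N satisfies dist(p,n) < dist(p,m). Then the following two conditions are equivalent: (Condition 1) for all n ∈ N, dist(m,n) ≥ dist(m,p); (Condition 2) lune(p,m) ∩ C = ∅, or every u ∈ lune(p,m) ∩ C satisfies u ∉ N. Here lune(p,m) = B(p, dist(p,m)) ∩ B(m, dist(m,p)) with B the open ball. -/
theorem hnsw_nsg_equiv {α : Type*} [MetricSpace α] (p : α) (C N : Set α)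
    (hC : C.Finite) (hp : p ∉ C) (hNC : N ⊆ C) (m : α) (hm : m ∈ C \ N)
    (hclose : ∀ n ∈ N, dist p n < dist p m) :
    (∀ n ∈ N, dist m n ≥ dist m p) ↔
      ((Metric.ball p (dist p m) ∩ Metric.ball m (dist m p)) ∩ C = ∅ ∨
        ∀ u ∈ (Metric.ball p (dist p m) ∩ Metric.ball m (dist m p)) ∩ C,
          u ∉ N) := by
  constructor
  · intro h
    right
    rintro u ⟨⟨-, hu2⟩, -⟩ huN
    exact absurd (h u huN) (not_le.mpr (Metric.mem_ball'.mp hu2))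
  · rintro (h | h) n hn
    · by_contra hlt
      exact Set.eq_empty_iff_forall_notMem.mp h n
        ⟨⟨Metric.mem_ball'.mpr (hclose n hn), Metric.mem_ball'.mpr (not_le.mp hlt)⟩, hNC hn⟩
    · by_contra hlt
      exact h n ⟨⟨Metric.mem_ball'.mpr (hclose n hn), Metric.mem_ball'.mpr (not_le.mp hlt)⟩, hNC hn⟩ hn
end

section
/- Let p, x, y be points in a Euclidean space with dist(p,x) < dist(p,y), x ≠ p, y ≠ p. If x ∉ lune(p,y), then the angle ∠xpy at vertex p satisfies ∠xpy ≥ π/3, where lune(p,y) = B(p, dist(p,y)) ∩ B(y, dist(y,p)) with B the open ball. -/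
theorem angle_ge_of_not_mem_lune {d : ℕ} (p x y : EuclideanSpace ℝ (Fin d))
    (hlt : dist p x < dist p y) (hx : x ≠ p) (hy : y ≠ p)
    (hlune : x ∉ Metric.ball p (dist p y) ∩ Metric.ball y (dist y p)) :
    EuclideanGeometry.angle x p y ≥ Real.pi / 3 := by
  have hxy : dist y p ≤ dist x y := by
    by_contra h
    push_neg at h
    exact hlune ⟨by simpa [dist_comm] using hlt, by simpa [dist_comm] using h⟩
  have hpx : 0 < dist p x := dist_pos.2 (fun h => hx h.symm)
  have hpy : 0 < dist p y := dist_pos.2 (fun h => hy h.symm)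
  have hcos : Real.cos (EuclideanGeometry.angle x p y) ≤ 1 / 2 := by
    have hlaw := EuclideanGeometry.law_cos x p y
    have h1 : dist p y ≤ dist x y := by simpa [dist_comm] using hxy
    rw [dist_comm x p, dist_comm y p] at hlaw
    nlinarith [mul_le_mul h1 h1 (le_of_lt hpy) (dist_nonneg (x := x) (y := y)),
      mul_pos hpx hpy, mul_lt_mul_of_pos_left hlt hpx]
  by_contra h
  push_neg at h
  have := Real.cos_lt_cos_of_nonneg_of_le_pi (EuclideanGeometry.angle_nonneg x p y)
    (by linarith [Real.pi_pos]) h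
  rw [Real.cos_pi_div_three] at this
  linarith
end
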